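/- Let N be a positive integer, b = 1/N, and let g ∈ L²(0,1) be such that for some constants 0 < m ≤ M one has m ≤ |g(x)| ≤ M for almost every x ∈ (0,1). For k ∈ ℤ let g_k ∈ L²(0,1) be the element with representative x ↦ exp(2πi·k·b·x)·g(x). Then (g_k)_{k∈ℤ} is a frame of L²(0,1), i.e. there exist A, B > 0 with A‖f‖² ≤ ∑_{k∈ℤ} |⟨f, g_k⟩|² ≤ B‖f‖² for all f ∈ L²(0,1); moreover g_k = E₁ᵏ g for all k ∈ ℤ, where E₁ is the unitary operator on L²(0,1) given by (E₁ f)(x) = exp(2πi·b·x)·f(x). -/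

import Mathlib

noncomputable section

open MeasureTheory
open scoped InnerProductSpace

/-- `f` is a frame of `H` with lower bound `A` and upper bound `B`. -/
def IsFrame {H : Type} [NormedAddCommGroup H] [InnerProductSpace ℂ H] {I : Type}
    (f : I → H) (A B : ℝ) : Prop :=
  0 < A ∧ 0 < B ∧ ∀ x : H,
    Summable (fun n : I => ‖(inner ℂ x (f n) : ℂ)‖ ^ 2) ∧
    A * ‖x‖ ^ 2 ≤ ∑' n : I, ‖(inner ℂ x (f n) : ℂ)‖ ^ 2 ∧
    ∑' n : I, ‖(inner ℂ x (f n) : ℂ)‖ ^ 2 ≤ B * ‖x‖ ^ 2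

open Complex Set

local notation "μ01" => MeasureTheory.volume.restrict (Set.Ioo (0:ℝ) 1)
abbrev L2I := Lp ℂ 2 (MeasureTheory.volume.restrict (Set.Ioo (0:ℝ) 1))

lemma auxE (b : ℝ) (E₁ : L2I ≃ₗᵢ[ℂ] L2I)
    (hE₁ : ∀ f : L2I, (E₁ f : ℝ → ℂ) =ᵐ[μ01]
      fun x : ℝ => Complex.exp (2 * (Real.pi : ℂ) * Complex.I * (b : ℂ) * (x : ℂ)) * (f : ℝ → ℂ) x)
    (k : ℤ) (f : L2I) :
    ((E₁ ^ k) f : ℝ → ℂ) =ᵐ[μ01]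
      fun x : ℝ => Complex.exp (2 * (Real.pi : ℂ) * Complex.I * (k : ℂ) * (b : ℂ) * (x : ℂ)) * (f : ℝ → ℂ) x := by
  have hsymm : ∀ f : L2I, (E₁.symm f : ℝ → ℂ) =ᵐ[μ01]
      fun x : ℝ => Complex.exp (-(2 * (Real.pi : ℂ) * Complex.I * (b : ℂ) * (x : ℂ))) * (f : ℝ → ℂ) x := by
    intro f
    have h := hE₁ (E₁.symm f)
    rw [E₁.apply_symm_apply] at h
    filter_upwards [h] with x hx
    rw [hx, ← mul_assoc, ← Complex.exp_add, neg_add_cancel, Complex.exp_zero, one_mul]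
  induction k using Int.induction_on generalizing f with
  | zero =>
      simp only [zpow_zero, LinearIsometryEquiv.coe_one, id_eq, Int.cast_zero, mul_zero, zero_mul,
        Complex.exp_zero, one_mul]
      exact Filter.EventuallyEq.rfl
  | succ k ih =>
      have heq : (E₁ ^ ((k : ℤ) + 1)) f = (E₁ ^ (k : ℤ)) (E₁ f) := by
        rw [zpow_add_one]; rfl
      rw [heq]
      filter_upwards [ih (E₁ f), hE₁ f] with x hx1 hx2
      rw [hx1, hx2, ← mul_assoc, ← Complex.exp_add]
      congr 2
      push_cast
      ring
  | pred k ih =>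
      have heq : (E₁ ^ (-(k : ℤ) - 1)) f = (E₁ ^ (-(k : ℤ))) (E₁.symm f) := by
        rw [zpow_sub_one]; rfl
      rw [heq]
      filter_upwards [ih (E₁.symm f), hsymm f] with x hx1 hx2
      rw [hx1, hx2, ← mul_assoc, ← Complex.exp_add]
      congr 2
      push_cast
      ring


lemma norm_exp_two_pi (c x : ℝ) :
    ‖Complex.exp (2 * (Real.pi:ℂ) * Complex.I * (c:ℂ) * (x:ℂ))‖ = 1 := by
  have h : 2 * (Real.pi:ℂ) * Complex.I * (c:ℂ) * (x:ℂ)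
      = ((2 * Real.pi * c * x : ℝ) : ℂ) * Complex.I := by push_cast; ring
  rw [h, Complex.norm_exp_ofReal_mul_I]

lemma master (h : ℝ → ℂ) (hmeas : StronglyMeasurable h)
    (hmem : MemLp h 2 (volume.restrict (Set.Ioc (0:ℝ) 1))) :
    Summable (fun n : ℤ =>
      ‖∫ x in Set.Ioc (0:ℝ) 1, Complex.exp (2 * (Real.pi:ℂ) * Complex.I * (n:ℂ) * (x:ℂ)) * h x‖ ^ 2) ∧
    ∑' n : ℤ, ‖∫ x in Set.Ioc (0:ℝ) 1,
        Complex.exp (2 * (Real.pi:ℂ) * Complex.I * (n:ℂ) * (x:ℂ)) * h x‖ ^ 2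
      = ∫ x in Set.Ioc (0:ℝ) 1, ‖h x‖ ^ 2 := by
  haveI : Fact ((0:ℝ) < 1) := ⟨zero_lt_one⟩
  set H : AddCircle (1:ℝ) → ℂ := AddCircle.liftIoc 1 0 h with hH
  have hHmeas : StronglyMeasurable H := by
    exact hmeas.comp_measurable
      (measurable_subtype_coe.comp (AddCircle.measurableEquivIoc 1 0).measurable)
  have hHcomp : ∀ x ∈ Set.Ioc (0:ℝ) 1, H (x : AddCircle (1:ℝ)) = h x := by
    intro x hx
    exact AddCircle.liftIoc_coe_apply (by simpa using hx)
  have hvol : (volume : Measure (AddCircle (1:ℝ))) = AddCircle.haarAddCircle := by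
    rw [AddCircle.volume_eq_smul_haarAddCircle]; simp
  have hmk := AddCircle.measurePreserving_mk (1:ℝ) 0
  rw [zero_add] at hmk
  have haeeq : (H ∘ (↑· : ℝ → AddCircle (1:ℝ))) =ᵐ[volume.restrict (Set.Ioc (0:ℝ) 1)] h := by
    refine (ae_restrict_iff' measurableSet_Ioc).2 (Filter.Eventually.of_forall fun x hx => ?_)
    exact hHcomp x hx
  have hHmem : MemLp H 2 AddCircle.haarAddCircle := by
    refine ⟨hHmeas.aestronglyMeasurable, ?_⟩
    rw [← hvol, ← eLpNorm_comp_measurePreserving hHmeas.aestronglyMeasurable hmk,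
      eLpNorm_congr_ae haeeq]
    exact hmem.2
  set F : Lp ℂ 2 AddCircle.haarAddCircle := hHmem.toLp H with hF
  have hcoeff : ∀ n : ℤ, fourierCoeff (F : AddCircle (1:ℝ) → ℂ) n
      = ∫ x in Set.Ioc (0:ℝ) 1,
          Complex.exp (-(2 * (Real.pi:ℂ) * Complex.I * (n:ℂ) * (x:ℂ))) * h x := by
    intro n
    have h1 : fourierCoeff (F : AddCircle (1:ℝ) → ℂ) n = fourierCoeff H n := by
      unfold fourierCoeff
      apply integral_congr_ae
      filter_upwards [hHmem.coeFn_toLp] with t ht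
      rw [ht]
    rw [h1, fourierCoeff_eq_intervalIntegral H n 0]
    rw [zero_add, intervalIntegral.integral_of_le zero_le_one]
    rw [one_div_one, one_smul]
    refine setIntegral_congr_fun measurableSet_Ioc fun x hx => ?_
    rw [hHcomp x hx, fourier_coe_apply, smul_eq_mul]
    congr 2
    push_cast
    ring
  have hsum : Summable fun n : ℤ => ‖fourierCoeff (F : AddCircle (1:ℝ) → ℂ) n‖ ^ 2 := by
    have := fourierBasis.orthonormal.inner_products_summable (x := F)
    refine this.congr fun n => ?_
    rw [← HilbertBasis.repr_apply_apply, fourierBasis_repr]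
  have hts := tsum_sq_fourierCoeff F
  have hFint : ∫ t : AddCircle (1:ℝ), ‖F t‖ ^ 2 ∂AddCircle.haarAddCircle
      = ∫ x in Set.Ioc (0:ℝ) 1, ‖h x‖ ^ 2 := by
    have e1 : ∫ t : AddCircle (1:ℝ), ‖F t‖ ^ 2 ∂AddCircle.haarAddCircle
        = ∫ t : AddCircle (1:ℝ), ‖H t‖ ^ 2 ∂AddCircle.haarAddCircle := by
      apply integral_congr_ae
      filter_upwards [hHmem.coeFn_toLp] with t ht
      rw [ht]
    rw [e1, ← hvol, ← hmk.map_eq,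
      integral_map hmk.aemeasurable
        (by exact (hHmeas.norm.pow 2).aestronglyMeasurable.mono_measure le_rfl)]
    apply integral_congr_ae
    filter_upwards [haeeq] with x hx
    simp only [Function.comp_apply] at hx
    rw [hx]
  -- identify our integral with fourierCoeff F (-n)
  have hkey : ∀ n : ℤ,
      (∫ x in Set.Ioc (0:ℝ) 1, Complex.exp (2 * (Real.pi:ℂ) * Complex.I * (n:ℂ) * (x:ℂ)) * h x)
        = fourierCoeff (F : AddCircle (1:ℝ) → ℂ) (-n) := by
    intro n
    rw [hcoeff (-n)]
    refine setIntegral_congr_fun measurableSet_Ioc fun x hx => ?_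
    congr 1
    push_cast
    ring_nf
  constructor
  · refine (hsum.comp_injective (neg_injective : Function.Injective (Neg.neg : ℤ → ℤ))).congr fun n => ?_
    rw [Function.comp_apply, hkey n]
  · calc ∑' n : ℤ, ‖∫ x in Set.Ioc (0:ℝ) 1,
          Complex.exp (2 * (Real.pi:ℂ) * Complex.I * (n:ℂ) * (x:ℂ)) * h x‖ ^ 2
        = ∑' n : ℤ, ‖fourierCoeff (F : AddCircle (1:ℝ) → ℂ) (-n)‖ ^ 2 := by
          exact tsum_congr fun n => by rw [hkey n]
      _ = ∑' n : ℤ, ‖fourierCoeff (F : AddCircle (1:ℝ) → ℂ) n‖ ^ 2 := by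
          exact (Equiv.neg ℤ).tsum_eq (fun n => ‖fourierCoeff (F : AddCircle (1:ℝ) → ℂ) n‖ ^ 2)
      _ = ∫ x in Set.Ioc (0:ℝ) 1, ‖h x‖ ^ 2 := by rw [hts, hFint]

lemma frame_core (N : ℕ) (hN : 0 < N) (b : ℝ) (hb : b = 1 / (N : ℝ))
    (g : Lp ℂ 2 (volume.restrict (Set.Ioo (0:ℝ) 1)))
    (m M : ℝ) (hm : 0 < m) (hM : 0 < M)
    (hg : ∀ᵐ x ∂(volume.restrict (Set.Ioo (0:ℝ) 1)),
      m ≤ ‖(g : ℝ → ℂ) x‖ ∧ ‖(g : ℝ → ℂ) x‖ ≤ M)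
    (gk : ℤ → Lp ℂ 2 (volume.restrict (Set.Ioo (0:ℝ) 1)))
    (hgk : ∀ k : ℤ, (gk k : ℝ → ℂ) =ᵐ[volume.restrict (Set.Ioo (0:ℝ) 1)]
      fun x : ℝ => Complex.exp (2 * (Real.pi : ℂ) * Complex.I * (k : ℂ) * (b : ℂ) * (x : ℂ)) *
        (g : ℝ → ℂ) x)
    (f : Lp ℂ 2 (volume.restrict (Set.Ioo (0:ℝ) 1))) :
    Summable (fun n : ℤ => ‖(inner ℂ f (gk n) : ℂ)‖ ^ 2) ∧
    (N : ℝ) * m ^ 2 * ‖f‖ ^ 2 ≤ ∑' n : ℤ, ‖(inner ℂ f (gk n) : ℂ)‖ ^ 2 ∧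
    ∑' n : ℤ, ‖(inner ℂ f (gk n) : ℂ)‖ ^ 2 ≤ (N : ℝ) * M ^ 2 * ‖f‖ ^ 2 := by
  haveI : NeZero N := ⟨hN.ne'⟩
  have hμν : volume.restrict (Set.Ioo (0:ℝ) 1) = volume.restrict (Set.Ioc (0:ℝ) 1) :=
    restrict_Ioo_eq_restrict_Ioc
  set φ : ℝ → ℂ := fun x => (starRingEnd ℂ) ((f : ℝ → ℂ) x) * (g : ℝ → ℂ) x with hφdef
  have hφmeas : StronglyMeasurable φ :=
    (Complex.continuous_conj.comp_stronglyMeasurable (Lp.stronglyMeasurable f)).mul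
      (Lp.stronglyMeasurable g)
  have hφnorm : ∀ x : ℝ, ‖φ x‖ = ‖(f : ℝ → ℂ) x‖ * ‖(g : ℝ → ℂ) x‖ := by
    intro x
    rw [hφdef]
    simp [norm_mul]
  have hgIoc : ∀ᵐ x ∂(volume.restrict (Set.Ioc (0:ℝ) 1)),
      m ≤ ‖(g : ℝ → ℂ) x‖ ∧ ‖(g : ℝ → ℂ) x‖ ≤ M := by rw [← hμν]; exact hg
  have hφmem : MemLp φ 2 (volume.restrict (Set.Ioc (0:ℝ) 1)) := by
    rw [← hμν]
    refine MemLp.of_le ((Lp.memLp f).const_mul (M:ℂ)) hφmeas.aestronglyMeasurable ?_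
    filter_upwards [hg] with x hx
    rw [hφnorm x, norm_mul, Complex.norm_real, Real.norm_of_nonneg hM.le]
    exact mul_le_mul_of_nonneg_left hx.2 (norm_nonneg _) |>.trans_eq (mul_comm _ _)
  -- the modulated functions
  set φr : ℤ → ℝ → ℂ := fun r x =>
    Complex.exp (2 * (Real.pi:ℂ) * Complex.I * (r:ℂ) * (b:ℂ) * (x:ℂ)) * φ x with hφrdef
  have hφrnorm : ∀ (r : ℤ) (x : ℝ), ‖φr r x‖ = ‖φ x‖ := by
    intro r x
    rw [hφrdef]
    simp only [norm_mul]
    have : (2 * (Real.pi:ℂ) * Complex.I * (r:ℂ) * (b:ℂ) * (x:ℂ))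
        = 2 * (Real.pi:ℂ) * Complex.I * (((r : ℝ) * b : ℝ):ℂ) * (x:ℂ) := by push_cast; ring
    rw [this, norm_exp_two_pi, one_mul]
  have hφrmeas : ∀ r : ℤ, StronglyMeasurable (φr r) := by
    intro r
    refine StronglyMeasurable.mul ?_ hφmeas
    exact (Complex.continuous_exp.comp
      ((continuous_const.mul Complex.continuous_ofReal))).stronglyMeasurable
  have hφrmem : ∀ r : ℤ, MemLp (φr r) 2 (volume.restrict (Set.Ioc (0:ℝ) 1)) := by
    intro r
    refine MemLp.of_le hφmem (hφrmeas r).aestronglyMeasurable ?_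
    exact Filter.Eventually.of_forall fun x => le_of_eq (hφrnorm r x)
  have hmaster := fun r : ℤ => master (φr r) (hφrmeas r) (hφrmem r)
  -- the inner products
  have hNb : (N:ℂ) * (b:ℂ) = 1 := by
    rw [hb]
    push_cast
    field_simp
    exact div_self (by exact_mod_cast hN.ne')
  have hinner : ∀ k : ℤ, (inner ℂ f (gk k) : ℂ)
      = ∫ x in Set.Ioc (0:ℝ) 1,
          Complex.exp (2 * (Real.pi:ℂ) * Complex.I * (k:ℂ) * (b:ℂ) * (x:ℂ)) * φ x := by
    intro k
    rw [← hμν, L2.inner_def]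
    simp_rw [RCLike.inner_apply]
    apply integral_congr_ae
    filter_upwards [hgk k] with x hx
    rw [hx, hφdef]
    ring
  have hsplit : ∀ q r : ℤ, (inner ℂ f (gk (q * (N:ℤ) + r)) : ℂ)
      = ∫ x in Set.Ioc (0:ℝ) 1,
          Complex.exp (2 * (Real.pi:ℂ) * Complex.I * (q:ℂ) * (x:ℂ)) * φr r x := by
    intro q r
    rw [hinner]
    refine setIntegral_congr_fun measurableSet_Ioc fun x hx => ?_
    have hsum : ((q * (N:ℤ) + r : ℤ) : ℂ) * (b:ℂ) = (q:ℂ) + (r:ℂ) * (b:ℂ) := by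
      push_cast
      linear_combination (q:ℂ) * hNb
    have hexp : (2 * (Real.pi:ℂ) * Complex.I * ((q * (N:ℤ) + r : ℤ):ℂ) * (b:ℂ) * (x:ℂ))
        = 2 * (Real.pi:ℂ) * Complex.I * (q:ℂ) * (x:ℂ)
          + 2 * (Real.pi:ℂ) * Complex.I * (r:ℂ) * (b:ℂ) * (x:ℂ) := by
      linear_combination (2 * (Real.pi:ℂ) * Complex.I * (x:ℂ)) * hsum
    simp only [hφrdef]
    rw [hexp, Complex.exp_add]
    ring
  -- reindex
  set e : ℤ ≃ ℤ × Fin N := Int.divModEquiv N with he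
  set T : ℤ × Fin N → ℝ := fun p =>
    ‖∫ x in Set.Ioc (0:ℝ) 1,
        Complex.exp (2 * (Real.pi:ℂ) * Complex.I * (p.1:ℂ) * (x:ℂ)) * φr ((p.2 : ℕ) : ℤ) x‖ ^ 2
    with hT
  have hae : ∀ p : ℤ × Fin N, ‖(inner ℂ f (gk (e.symm p)) : ℂ)‖ ^ 2 = T p := by
    rintro ⟨q, r⟩
    have : e.symm (q, r) = q * (N:ℤ) + ((r : ℕ) : ℤ) := rfl
    rw [this, hsplit q ((r : ℕ) : ℤ)]
  have hTsummable : Summable T := by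
    refine (summable_prod_of_nonneg ?_).2 ⟨?_, ?_⟩
    · intro p; positivity
    · intro q
      exact Summable.of_finite
    · refine Summable.congr ?_ (fun q => (tsum_fintype _).symm)
      refine summable_sum fun r _ => ?_
      exact (hmaster ((r : ℕ) : ℤ)).1
  have hsummable : Summable (fun n : ℤ => ‖(inner ℂ f (gk n) : ℂ)‖ ^ 2) := by
    rw [← Equiv.summable_iff e.symm]
    exact hTsummable.congr fun p => (hae p).symm
  -- constant C
  set C : ℝ := ∫ x in Set.Ioc (0:ℝ) 1, ‖φ x‖ ^ 2 with hC
  have hCr : ∀ r : ℤ, (∫ x in Set.Ioc (0:ℝ) 1, ‖φr r x‖ ^ 2) = C := by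
    intro r
    refine setIntegral_congr_fun measurableSet_Ioc fun x hx => ?_
    rw [hφrnorm r x]
  have htsum : ∑' n : ℤ, ‖(inner ℂ f (gk n) : ℂ)‖ ^ 2 = (N : ℝ) * C := by
    rw [← e.symm.tsum_eq]
    rw [tsum_congr hae]
    set T' : Fin N × ℤ → ℝ := fun p => T (p.2, p.1) with hT'
    have hT'sum : Summable T' := hTsummable.comp_injective (Equiv.prodComm (Fin N) ℤ).injective
    have hswap : ∑' p : ℤ × Fin N, T p = ∑' p : Fin N × ℤ, T' p :=
      ((Equiv.prodComm (Fin N) ℤ).tsum_eq T).symm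
    rw [hswap, Summable.tsum_prod' hT'sum (fun r => (hmaster ((r : ℕ) : ℤ)).1)]
    have hone : ∀ r : Fin N, ∑' q : ℤ, T' (r, q) = C := fun r =>
      ((hmaster ((r : ℕ) : ℤ)).2).trans (hCr ((r : ℕ) : ℤ))
    calc ∑' (r : Fin N) (q : ℤ), T' (r, q) = ∑' _r : Fin N, C := tsum_congr hone
      _ = (N : ℝ) * C := by
          rw [tsum_fintype]
          simp [Finset.sum_const, mul_comm]
  -- bounds on C
  have hfint : Integrable (fun x => ‖(f : ℝ → ℂ) x‖ ^ 2) (volume.restrict (Set.Ioc (0:ℝ) 1)) := by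
    rw [← hμν]
    exact (memLp_two_iff_integrable_sq_norm (Lp.aestronglyMeasurable f)).1 (Lp.memLp f)
  have hφint : Integrable (fun x => ‖φ x‖ ^ 2) (volume.restrict (Set.Ioc (0:ℝ) 1)) :=
    (memLp_two_iff_integrable_sq_norm hφmeas.aestronglyMeasurable).1 hφmem
  have hnormf : (∫ x in Set.Ioc (0:ℝ) 1, ‖(f : ℝ → ℂ) x‖ ^ 2) = ‖f‖ ^ 2 := by
    rw [← hμν]
    have H₃ := congr_arg RCLike.re (@L2.inner_def ℝ ℂ ℂ _ _ _ _ _ f f)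
    rw [← integral_re (L2.integrable_inner f f)] at H₃
    simp only [← InnerProductSpace.norm_sq_eq_re_inner] at H₃
    rw [← H₃]
  have hCle : C ≤ M ^ 2 * ‖f‖ ^ 2 := by
    rw [← hnormf, ← integral_const_mul]
    refine integral_mono_ae hφint (hfint.const_mul _) ?_
    filter_upwards [hgIoc] with x hx
    rw [hφnorm x]
    calc (‖(f : ℝ → ℂ) x‖ * ‖(g : ℝ → ℂ) x‖) ^ 2
        = ‖(g : ℝ → ℂ) x‖ ^ 2 * ‖(f : ℝ → ℂ) x‖ ^ 2 := by ring
      _ ≤ M ^ 2 * ‖(f : ℝ → ℂ) x‖ ^ 2 := by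
          have := hx.2
          gcongr
  have hCge : m ^ 2 * ‖f‖ ^ 2 ≤ C := by
    rw [← hnormf, ← integral_const_mul]
    refine integral_mono_ae (hfint.const_mul _) hφint ?_
    filter_upwards [hgIoc] with x hx
    rw [hφnorm x]
    calc m ^ 2 * ‖(f : ℝ → ℂ) x‖ ^ 2 ≤ ‖(g : ℝ → ℂ) x‖ ^ 2 * ‖(f : ℝ → ℂ) x‖ ^ 2 := by
          have := hx.1
          gcongr
      _ = (‖(f : ℝ → ℂ) x‖ * ‖(g : ℝ → ℂ) x‖) ^ 2 := by ring
  refine ⟨hsummable, ?_, ?_⟩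
  · rw [htsum]
    calc (N:ℝ) * m ^ 2 * ‖f‖ ^ 2 = (N:ℝ) * (m ^ 2 * ‖f‖ ^ 2) := by ring
      _ ≤ (N:ℝ) * C := by gcongr <;> first | exact Nat.cast_nonneg N | exact hCge
  · rw [htsum]
    calc (N:ℝ) * C ≤ (N:ℝ) * (M ^ 2 * ‖f‖ ^ 2) := by
          gcongr <;> first | exact Nat.cast_nonneg N | exact hCle
      _ = (N:ℝ) * M ^ 2 * ‖f‖ ^ 2 := by ring

theorem stmt19 (N : ℕ) (hN : 0 < N) (b : ℝ) (hb : b = 1 / (N : ℝ))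
    (g : Lp ℂ 2 (volume.restrict (Set.Ioo (0:ℝ) 1)))
    (m M : ℝ) (hm : 0 < m) (hM : 0 < M)
    (hg : ∀ᵐ x ∂(volume.restrict (Set.Ioo (0:ℝ) 1)),
      m ≤ ‖(g : ℝ → ℂ) x‖ ∧ ‖(g : ℝ → ℂ) x‖ ≤ M)
    (gk : ℤ → Lp ℂ 2 (volume.restrict (Set.Ioo (0:ℝ) 1)))
    (hgk : ∀ k : ℤ, (gk k : ℝ → ℂ) =ᵐ[volume.restrict (Set.Ioo (0:ℝ) 1)]
      fun x : ℝ => Complex.exp (2 * (Real.pi : ℂ) * Complex.I * (k : ℂ) * (b : ℂ) * (x : ℂ)) *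
        (g : ℝ → ℂ) x)
    (E₁ : Lp ℂ 2 (volume.restrict (Set.Ioo (0:ℝ) 1)) ≃ₗᵢ[ℂ]
      Lp ℂ 2 (volume.restrict (Set.Ioo (0:ℝ) 1)))
    (hE₁ : ∀ f : Lp ℂ 2 (volume.restrict (Set.Ioo (0:ℝ) 1)),
      (E₁ f : ℝ → ℂ) =ᵐ[volume.restrict (Set.Ioo (0:ℝ) 1)]
        fun x : ℝ => Complex.exp (2 * (Real.pi : ℂ) * Complex.I * (b : ℂ) * (x : ℂ)) *
          (f : ℝ → ℂ) x) :
    (∃ A B : ℝ, IsFrame gk A B) ∧ ∀ k : ℤ, gk k = (E₁ ^ k) g := by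
  have hNpos : (0:ℝ) < N := Nat.cast_pos.2 hN
  constructor
  · refine ⟨(N:ℝ) * m ^ 2, (N:ℝ) * M ^ 2, ?_, ?_, ?_⟩
    · exact mul_pos hNpos (pow_pos hm 2)
    · exact mul_pos hNpos (pow_pos hM 2)
    · exact fun f => frame_core N hN b hb g m M hm hM hg gk hgk f
  · exact fun k => Lp.ext ((hgk k).trans (auxE b E₁ hE₁ k g).symm)
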